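/- For every integer d ≥ 2 there exists a finite hypothesis class H with Littlestone dimension Ldim(H) = d and list replicability number List(H) = 2; such a class is given by the collection of thresholds over a linearly ordered domain of 2^d points. -/

import Mathlib

open scoped ENNReal

namespace Replicability

variable {X : Type*}

/-- A labeled sample of size `n`: `n` pairs of a domain point and a boolean label
(`true` encodes `+1` and `false` encodes `-1`). -/
abbrev Sample (X : Type*) (n : ℕ) := Fin n → X × Bool

/-- A (possibly randomized) learning rule: for every sample size `n` it maps a sample of
size `n` to a probability distribution over output predictors `X → Bool`. -/
abbrev LearningRule (X : Type*) := (n : ℕ) → Sample X n → PMF (X → Bool)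

/-- The population loss `L_D(h) = Pr_{(x,y) ~ D}[h x ≠ y]` of a predictor `h` with
respect to a distribution `D` over labeled examples. -/
noncomputable def popLoss (D : PMF (X × Bool)) (h : X → Bool) : ℝ≥0∞ :=
  D.toOuterMeasure {p | h p.1 ≠ p.2}

/-- `D` is realizable by the hypothesis class `H`: `inf_{h ∈ H} L_D(h) = 0`. -/
def Realizable (H : Set (X → Bool)) (D : PMF (X × Bool)) : Prop :=
  ∀ ε : ℝ≥0∞, 0 < ε → ∃ h ∈ H, popLoss D h < ε

/-- The probability that, for an i.i.d. sample `S ~ D^n`, the (random) output of the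
learning rule `A` on `S` lands in the set `E` of predictors. -/
noncomputable def outProb (D : PMF (X × Bool)) {n : ℕ}
    (A : Sample X n → PMF (X → Bool)) (E : Set (X → Bool)) : ℝ≥0∞ :=
  ∑' S : Sample X n, (∏ i, D (S i)) * (A S).toOuterMeasure E

/-- `A` is an `(ε, ρ)`-globally stable learner for `H`: there is a sample size `n` such
that for every `H`-realizable `D` some predictor `h` with `L_D(h) ≤ ε` is output with
probability at least `ρ`. -/
def IsGSLearner (H : Set (X → Bool)) (A : LearningRule X) (ε ρ : ℝ) : Prop :=
  ∃ n : ℕ, ∀ D : PMF (X × Bool), Realizable H D →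
    ∃ h : X → Bool, popLoss D h ≤ ENNReal.ofReal ε ∧
      ENNReal.ofReal ρ ≤ outProb D (A n) {h}

/-- The global stability parameter `ρ(H)`. -/
noncomputable def globalStability (H : Set (X → Bool)) : ℝ :=
  sSup {ρ : ℝ | ρ ∈ Set.Icc (0 : ℝ) 1 ∧
    ∀ ε : ℝ, 0 < ε → ∃ A : LearningRule X, IsGSLearner H A ε ρ}

/-- The global stability parameter `ρ_F(H)` of `H` with respect to the output class `F`:
only learners all of whose outputs lie in `F` are considered. -/
noncomputable def globalStabilityIn (F H : Set (X → Bool)) : ℝ :=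
  sSup {ρ : ℝ | ρ ∈ Set.Icc (0 : ℝ) 1 ∧
    ∀ ε : ℝ, 0 < ε → ∃ A : LearningRule X,
      (∀ n S, (A n S).support ⊆ F) ∧ IsGSLearner H A ε ρ}

/-- `A` is an `(ε, L)`-list replicable learner for `H`: for every `δ > 0` there is a
sample size `n` such that for every `H`-realizable `D` there are predictors
`h_1, …, h_L`, each of population loss at most `ε`, such that the output of `A` is one
of them with probability at least `1 - δ`. -/
def IsListLearner (H : Set (X → Bool)) (A : LearningRule X) (ε : ℝ) (L : ℕ) : Prop :=
  ∀ δ : ℝ, 0 < δ → ∃ n : ℕ, ∀ D : PMF (X × Bool), Realizable H D →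
    ∃ hs : Fin L → (X → Bool),
      (∀ ℓ, popLoss D (hs ℓ) ≤ ENNReal.ofReal ε) ∧
      ENNReal.ofReal (1 - δ) ≤ outProb D (A n) (Set.range hs)

/-- The list replicability number `List(H)` (`⊤` if no finite list size works). -/
noncomputable def listNumber (H : Set (X → Bool)) : ℕ∞ :=
  sInf {L : ℕ∞ | ∃ l : ℕ, L = l ∧
    ∀ ε : ℝ, 0 < ε → ∃ A : LearningRule X, IsListLearner H A ε l}

/-- `A` is a proper learning rule for `H`: every output lies in `H`. -/
def IsProper (H : Set (X → Bool)) (A : LearningRule X) : Prop :=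
  ∀ n S, ((A n S).support : Set (X → Bool)) ⊆ H

/-- `A` is a proper `(ε, L)`-list replicable learner for `H`: a proper learning rule
whose lists consist of hypotheses from `H`. -/
def IsProperListLearner (H : Set (X → Bool)) (A : LearningRule X) (ε : ℝ) (L : ℕ) : Prop :=
  IsProper H A ∧
  ∀ δ : ℝ, 0 < δ → ∃ n : ℕ, ∀ D : PMF (X × Bool), Realizable H D →
    ∃ hs : Fin L → (X → Bool),
      (∀ ℓ, hs ℓ ∈ H) ∧
      (∀ ℓ, popLoss D (hs ℓ) ≤ ENNReal.ofReal ε) ∧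
      ENNReal.ofReal (1 - δ) ≤ outProb D (A n) (Set.range hs)

/-- The proper list replicability number `List_p(H)` (`⊤` if no finite list size works). -/
noncomputable def properListNumber (H : Set (X → Bool)) : ℕ∞ :=
  sInf {L : ℕ∞ | ∃ l : ℕ, L = l ∧
    ∀ ε : ℝ, 0 < ε → ∃ A : LearningRule X, IsProperListLearner H A ε l}

/-- `H` shatters the finite set `s`. -/
def Shatters (H : Set (X → Bool)) (s : Finset X) : Prop :=
  ∀ σ : X → Bool, ∃ h ∈ H, ∀ x ∈ s, h x = σ x

/-- The VC dimension of `H`, as an extended natural number. -/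
noncomputable def VCDim (H : Set (X → Bool)) : ℕ∞ :=
  sSup {d : ℕ∞ | ∃ s : Finset X, Shatters H s ∧ d = s.card}

/-- `H` shatters a complete binary mistake tree of depth `d`: there is an assignment of
a point to every binary string (only strings of length `< d` matter) such that every
branch `σ ∈ Bool^d` is realized by some `h ∈ H`. -/
def LdimGe (H : Set (X → Bool)) (d : ℕ) : Prop :=
  ∃ tree : List Bool → X, ∀ σ : Fin d → Bool, ∃ h ∈ H,
    ∀ j : Fin d, h (tree (List.ofFn fun i : Fin j => σ (Fin.castLE j.isLt.le i))) = σ j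

/-- The Littlestone dimension of `H`, as an extended natural number. -/
noncomputable def Ldim (H : Set (X → Bool)) : ℕ∞ :=
  sSup {d : ℕ∞ | ∃ k : ℕ, d = k ∧ LdimGe H k}

/-- The projection of `H` to the finite set `s` contains a hollow star centered at some
pattern `f`: `f` is not realized by `H` on `s`, but each of the `|s|` patterns obtained
from `f` by flipping one coordinate is. -/
def HasHollowStar (H : Set (X → Bool)) (s : Finset X) : Prop :=
  ∃ f : X → Bool,
    (¬ ∃ h ∈ H, ∀ x ∈ s, h x = f x) ∧
    ∀ x₀ ∈ s, ∃ h ∈ H, h x₀ = !(f x₀) ∧ ∀ x ∈ s, x ≠ x₀ → h x = f x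

/-- The hollow star number of `H`, as an extended natural number. -/
noncomputable def HSdim (H : Set (X → Bool)) : ℕ∞ :=
  sSup {d : ℕ∞ | ∃ s : Finset X, HasHollowStar H s ∧ d = s.card}

/-- The class of `t` thresholds `τ_i : [t-1] → {±1}`, `i ∈ [t]`, where (identifying
`[t-1]` with `Fin (t-1)` and `[t]` with `Fin t` via `x ↦ x + 1`) `τ_i x = +1` iff `x ≥ i`. -/
def thresholdClass (t : ℕ) : Set (Fin (t - 1) → Bool) :=
  {h | ∃ i : Fin t, h = fun x : Fin (t - 1) => decide ((i : ℕ) ≤ (x : ℕ))}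

/-- The class of `s` singletons over `[s]`: `h_i x = +1` iff `x = i`. -/
def singletonClass (s : ℕ) : Set (Fin s → Bool) :=
  {h | ∃ i : Fin s, h = fun x => decide (x = i)}

/-- The empirical loss of `h` on the sample `S`. -/
noncomputable def empLoss {n : ℕ} (S : Sample X n) (h : X → Bool) : ℝ :=
  (Finset.univ.filter fun i => h (S i).1 ≠ (S i).2).card / n

/-- The sample `S` is consistent with `H`. -/
def Consistent (H : Set (X → Bool)) {n : ℕ} (S : Sample X n) : Prop :=
  ∃ h ∈ H, ∀ i, h (S i).1 = (S i).2

/-- `A` is an `ε'`-empirical learner for `H`: for all large enough sample sizes, on every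
sample consistent with `H` and every internal randomness, the output has empirical loss
at most `ε'`. -/
def IsEmpiricalLearner (H : Set (X → Bool)) (A : LearningRule X) (ε' : ℝ) : Prop :=
  ∃ n₀ : ℕ, ∀ n > n₀, ∀ S : Sample X n, Consistent H S →
    ∀ f ∈ (A n S).support, empLoss S f ≤ ε'

/-- An instability witness of size `k` for `H` with respect to the output class `F`
(`true` encodes the label `+1` and `false` the label `-1`). -/
def IsInstabilityWitness (H F : Set (X → Bool)) (k : ℕ)
    (W : Fin k × Bool → X × Bool) : Prop :=
  (∃ xy : X × Bool, ∀ σ : Fin k → Bool, ∃ h ∈ H, h xy.1 = xy.2 ∧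
      ∀ j : Fin k, W (j, σ j) ≠ xy ∧ h (W (j, σ j)).1 = (W (j, σ j)).2) ∧
  (∃ F' : Fin (k + 1) → Set (X → Bool),
      (∀ i, F' i ⊆ F) ∧
      (∀ f ∈ F, ∃! i, f ∈ F' i) ∧
      (∀ j : Fin k, ∀ f₀ ∈ F' 0, f₀ (W (j, false)).1 ≠ (W (j, false)).2) ∧
      (∀ j : Fin k, ∀ f ∈ F' j.succ, f (W (j, true)).1 ≠ (W (j, true)).2))

/-- The total variation distance between two distributions over a countable set. -/
noncomputable def tvDist {α : Type*} (p q : PMF α) : ℝ :=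
  (∑' a, |(p a).toReal - (q a).toReal|) / 2



section Aux

open Finset

/-! ### Part A: Littlestone dimension of thresholds -/

def tauF (t j : ℕ) : Fin (t - 1) → Bool := fun x => decide (j ≤ (x : ℕ))

lemma tauF_mem {t j : ℕ} (hj : j < t) : tauF t j ∈ thresholdClass t :=
  ⟨⟨j, hj⟩, rfl⟩

def wsum (d : ℕ) (f : ℕ → Bool) (j : ℕ) : ℕ :=
  ∑ l ∈ range j, (if f l then 0 else 2 ^ (d - 1 - l))

lemma wsum_congr (d : ℕ) {f g : ℕ → Bool} (j : ℕ) (h : ∀ l < j, f l = g l) :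
    wsum d f j = wsum d g j := by
  refine Finset.sum_congr rfl (fun l hl => ?_)
  rw [mem_range] at hl
  rw [h l hl]

lemma geo2 (k : ℕ) : ∑ i ∈ range k, 2 ^ (k - 1 - i) = 2 ^ k - 1 := by
  induction k with
  | zero => simp
  | succ k ih =>
    have h1 : ∀ i ∈ range k, 2 ^ (k + 1 - 1 - i) = 2 * 2 ^ (k - 1 - i) := by
      intro i hi
      rw [mem_range] at hi
      have : k + 1 - 1 - i = (k - 1 - i) + 1 := by omega
      rw [this, pow_succ]; ring
    rw [Finset.sum_range_succ, Finset.sum_congr rfl h1, ← Finset.mul_sum, ih]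
    have h2 : 1 ≤ 2 ^ k := Nat.one_le_two_pow
    have h3 : 2 ^ (k + 1) = 2 * 2 ^ k := by rw [pow_succ]; ring
    have h4 : 2 ^ (k + 1 - 1 - k) = 1 := by
      have : k + 1 - 1 - k = 0 := by omega
      rw [this, pow_zero]
    omega

lemma geo (d : ℕ) : ∀ j, j ≤ d → ∑ l ∈ range j, 2 ^ (d - 1 - l) = 2 ^ d - 2 ^ (d - j) := by
  intro j
  induction j with
  | zero => simp
  | succ j ih =>
    intro hj
    have hj' : j ≤ d := by omega
    rw [Finset.sum_range_succ, ih hj']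
    have h1 : 2 ^ (d - j) = 2 ^ (d - 1 - j) + 2 ^ (d - 1 - j) := by
      have : d - j = (d - 1 - j) + 1 := by omega
      rw [this, pow_succ]; ring
    have h2 : 2 ^ (d - j) ≤ 2 ^ d := Nat.pow_le_pow_right (by norm_num) (by omega)
    have h3 : 2 ^ (d - (j + 1)) = 2 ^ (d - 1 - j) := by congr 1; omega
    rw [h3, h1]
    generalize 2 ^ (d - 1 - j) = r at *
    generalize 2 ^ d = p at *
    omega

lemma geoIco (d j : ℕ) (hj : j < d) :
    ∑ l ∈ Ico (j + 1) d, 2 ^ (d - 1 - l) = 2 ^ (d - 1 - j) - 1 := by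
  rw [Finset.sum_Ico_eq_sum_range]
  have h1 : ∀ i ∈ range (d - (j + 1)), 2 ^ (d - 1 - (j + 1 + i)) = 2 ^ ((d - (j+1)) - 1 - i) := by
    intro i hi; congr 1; omega
  rw [Finset.sum_congr rfl h1, geo2]
  congr 2; omega

lemma wsum_le (d j : ℕ) (hj : j ≤ d) (f : ℕ → Bool) :
    wsum d f j ≤ 2 ^ d - 2 ^ (d - j) := by
  rw [← geo d j hj]
  exact Finset.sum_le_sum (fun l _ => by split <;> simp)

lemma two_pow_sub_pos (d : ℕ) (hd : 2 ≤ d) : 3 ≤ 2 ^ d - 1 := by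
  have : 2 ^ 2 ≤ 2 ^ d := Nat.pow_le_pow_right (by norm_num) hd
  omega

def treeFn (d : ℕ) (hd : 2 ≤ d) : List Bool → Fin (2 ^ d - 1) := fun s =>
  if h : s.length < d then
    ⟨wsum d (fun l => s.getD l true) s.length + 2 ^ (d - 1 - s.length) - 1, by
      have h1 := wsum_le d s.length (le_of_lt h) (fun l => s.getD l true)
      have h2 : 2 ^ (d - s.length) = 2 ^ (d - 1 - s.length) + 2 ^ (d - 1 - s.length) := by
        have : d - s.length = (d - 1 - s.length) + 1 := by omega
        rw [this, pow_succ]; ring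
      have h3 : 1 ≤ 2 ^ (d - 1 - s.length) := Nat.one_le_two_pow
      have h4 : 2 ^ (d - s.length) ≤ 2 ^ d := Nat.pow_le_pow_right (by norm_num) (by omega)
      have h5 := two_pow_sub_pos d hd
      omega⟩
  else ⟨0, by have := two_pow_sub_pos d hd; omega⟩

lemma ldimGe_pow (d : ℕ) (hd : 2 ≤ d) : LdimGe (thresholdClass (2 ^ d)) d := by
  refine ⟨treeFn d hd, fun σ => ?_⟩
  set σ' : ℕ → Bool := fun l => if h : l < d then σ ⟨l, h⟩ else true with hσ'
  have hidx : wsum d σ' d < 2 ^ d := by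
    have h1 := wsum_le d d le_rfl σ'
    have h2 : 1 ≤ 2 ^ (d - d) := Nat.one_le_two_pow
    have h3 : 2 ≤ 2 ^ d := by
      have : 2 ^ 1 ≤ 2 ^ d := Nat.pow_le_pow_right (by norm_num) (by omega)
      simpa using this
    omega
  refine ⟨tauF (2 ^ d) (wsum d σ' d), tauF_mem hidx, fun j => ?_⟩
  have hlen : (List.ofFn fun i : Fin j => σ (Fin.castLE j.isLt.le i)).length < d := by
    simp only [List.length_ofFn]; exact j.isLt
  rw [treeFn, dif_pos hlen]
  simp only [tauF, List.length_ofFn, Fin.val_mk]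
  have hws : wsum d (fun l => (List.ofFn fun i : Fin j => σ (Fin.castLE j.isLt.le i)).getD l true) (j : ℕ)
      = wsum d σ' (j : ℕ) := by
    refine wsum_congr d _ (fun l hl => ?_)
    have hl' : l < (List.ofFn fun i : Fin j => σ (Fin.castLE j.isLt.le i)).length := by
      simpa [List.length_ofFn] using hl
    rw [List.getD_eq_getElem _ _ hl', List.getElem_ofFn]
    have hld : l < d := lt_trans hl j.isLt
    simp only [hσ', dif_pos hld]
    rfl
  rw [hws]
  have hsplit : wsum d σ' d = wsum d σ' (j : ℕ) + (if σ' (j : ℕ) then 0 else 2 ^ (d - 1 - (j : ℕ)))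
      + ∑ l ∈ Ico ((j : ℕ) + 1) d, (if σ' l then 0 else 2 ^ (d - 1 - l)) := by
    unfold wsum
    rw [← Finset.sum_range_add_sum_Ico _ (show (j : ℕ) + 1 ≤ d by omega),
      Finset.sum_range_succ]
  have hR : ∑ l ∈ Ico ((j : ℕ) + 1) d, (if σ' l then 0 else 2 ^ (d - 1 - l))
      ≤ 2 ^ (d - 1 - (j : ℕ)) - 1 := by
    rw [← geoIco d (j : ℕ) j.isLt]
    exact Finset.sum_le_sum (fun l _ => by split <;> simp)
  have hσj : σ' (j : ℕ) = σ j := by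
    simp only [hσ', dif_pos j.isLt]
  have h3 : 1 ≤ 2 ^ (d - 1 - (j : ℕ)) := Nat.one_le_two_pow
  rcases hb : σ j with _ | _
  · rw [hσj, hb, if_neg (by simp)] at hsplit
    have hgoal : ¬ (wsum d σ' d ≤ wsum d σ' (j : ℕ) + 2 ^ (d - 1 - (j : ℕ)) - 1) := by omega
    simpa using hgoal
  · rw [hσj, hb, if_pos rfl] at hsplit
    have hgoal : wsum d σ' d ≤ wsum d σ' (j : ℕ) + 2 ^ (d - 1 - (j : ℕ)) - 1 := by omega
    simpa using hgoal

lemma ldimGe_le {t k : ℕ} (ht : 3 ≤ t) (h : LdimGe (thresholdClass t) k) : 2 ^ k ≤ t := by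
  classical
  obtain ⟨tree, hsh⟩ := h
  choose hf hmem hprop using hsh
  choose idx hidx using hmem
  have hinj : Function.Injective idx := by
    intro σ σ' hEq
    have hfeq : hf σ = hf σ' := by rw [hidx σ, hidx σ', hEq]
    by_contra hne
    have hPex : ∃ l, ∃ hl : l < k, σ ⟨l, hl⟩ ≠ σ' ⟨l, hl⟩ := by
      by_contra hc
      push_neg at hc
      exact hne (funext fun m => hc m.1 m.2)
    let l0 := Nat.find hPex
    obtain ⟨hl0k, hne0⟩ : ∃ hl : l0 < k, σ ⟨l0, hl⟩ ≠ σ' ⟨l0, hl⟩ := Nat.find_spec hPex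
    have hmin : ∀ i, i < l0 → ∀ hi : i < k, σ ⟨i, hi⟩ = σ' ⟨i, hi⟩ := by
      intro i hi hik
      have h' := Nat.find_min hPex hi
      push_neg at h'
      exact h' hik
    set jF : Fin k := ⟨l0, hl0k⟩ with hjF
    have hlist : (List.ofFn fun i : Fin jF => σ (Fin.castLE jF.isLt.le i))
        = (List.ofFn fun i : Fin jF => σ' (Fin.castLE jF.isLt.le i)) := by
      congr 1
      funext i
      exact hmin i.1 i.2 _
    have h1 := hprop σ jF
    have h2 := hprop σ' jF
    rw [hlist, hfeq] at h1
    exact hne0 (h1.symm.trans h2)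
  have hcard := Fintype.card_le_of_injective idx hinj
  simpa [Fintype.card_fun] using hcard

lemma Ldim_pow (d : ℕ) (hd : 2 ≤ d) : Ldim (thresholdClass (2 ^ d)) = (d : ℕ∞) := by
  apply le_antisymm
  · apply sSup_le
    rintro e ⟨k, rfl, hk⟩
    have h2 : 2 ^ k ≤ 2 ^ d := ldimGe_le (by
      have := two_pow_sub_pos d hd; omega) hk
    have : k ≤ d := (Nat.pow_le_pow_iff_right (by norm_num)).mp h2
    exact_mod_cast this
  · exact le_sSup ⟨d, rfl, ldimGe_pow d hd⟩


/-! ### sums of pmf values -/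

lemma sum_pmf_toReal {α : Type*} [Fintype α] (D : PMF α) :
    ∑ a : α, (D a).toReal = 1 := by
  have h := D.tsum_coe
  rw [tsum_fintype] at h
  rw [← ENNReal.toReal_sum (fun a _ => PMF.apply_ne_top D a), h, ENNReal.toReal_one]

/-! ### population quantities -/

noncomputable def pP {t : ℕ} (D : PMF (Fin (t - 1) × Bool)) (j : ℕ) : ℝ :=
  ∑ a : Fin (t - 1) × Bool, (D a).toReal * (if a.2 = true ∧ (a.1 : ℕ) < j then 1 else 0)

noncomputable def pM {t : ℕ} (D : PMF (Fin (t - 1) × Bool)) (j : ℕ) : ℝ :=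
  ∑ a : Fin (t - 1) × Bool, (D a).toReal * (if a.2 = false ∧ j ≤ (a.1 : ℕ) then 1 else 0)

noncomputable def Gf {t : ℕ} (D : PMF (Fin (t - 1) × Bool)) (j : ℕ) : ℝ := pP D j - pM D j

variable {t : ℕ} {D : PMF (Fin (t - 1) × Bool)}

lemma pP_nonneg (j : ℕ) : 0 ≤ pP D j :=
  Finset.sum_nonneg fun a _ => mul_nonneg ENNReal.toReal_nonneg (by split <;> norm_num)

lemma pM_nonneg (j : ℕ) : 0 ≤ pM D j :=
  Finset.sum_nonneg fun a _ => mul_nonneg ENNReal.toReal_nonneg (by split <;> norm_num)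

lemma pP_le_one (j : ℕ) : pP D j ≤ 1 := by
  rw [← sum_pmf_toReal D]
  refine Finset.sum_le_sum fun a _ => ?_
  have := ENNReal.toReal_nonneg (a := D a)
  split <;> nlinarith

lemma pM_le_one (j : ℕ) : pM D j ≤ 1 := by
  rw [← sum_pmf_toReal D]
  refine Finset.sum_le_sum fun a _ => ?_
  have := ENNReal.toReal_nonneg (a := D a)
  split <;> nlinarith

lemma pP_mono {j j' : ℕ} (h : j ≤ j') : pP D j ≤ pP D j' := by
  refine Finset.sum_le_sum fun a _ => ?_
  have := ENNReal.toReal_nonneg (a := D a)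
  by_cases h1 : a.2 = true ∧ (a.1 : ℕ) < j
  · rw [if_pos h1, if_pos ⟨h1.1, lt_of_lt_of_le h1.2 h⟩]
  · rw [if_neg h1]
    split <;> nlinarith

lemma pM_anti {j j' : ℕ} (h : j ≤ j') : pM D j' ≤ pM D j := by
  refine Finset.sum_le_sum fun a _ => ?_
  have := ENNReal.toReal_nonneg (a := D a)
  by_cases h1 : a.2 = false ∧ j' ≤ (a.1 : ℕ)
  · rw [if_pos h1, if_pos ⟨h1.1, le_trans h h1.2⟩]
  · rw [if_neg h1]
    split <;> nlinarith

lemma Gf_mono {j j' : ℕ} (h : j ≤ j') : Gf D j ≤ Gf D j' :=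
  sub_le_sub (pP_mono h) (pM_anti h)

lemma abs_Gf_le_one (j : ℕ) : |Gf D j| ≤ 1 := by
  rw [abs_le]
  constructor
  · have := pP_nonneg (D := D) j; have := pM_le_one (D := D) j
    rw [Gf]; linarith
  · have := pM_nonneg (D := D) j; have := pP_le_one (D := D) j
    rw [Gf]; linarith

/-! ### popLoss of thresholds -/

lemma popLoss_tauF (j : ℕ) :
    popLoss D (tauF t j) = ENNReal.ofReal (pP D j + pM D j) := by
  classical
  rw [popLoss, PMF.toOuterMeasure_apply, tsum_fintype]
  have hterm : ∀ a : Fin (t - 1) × Bool,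
      ({p : Fin (t - 1) × Bool | tauF t j p.1 ≠ p.2}).indicator (⇑D) a
      = ENNReal.ofReal ((D a).toReal * (if a.2 = true ∧ (a.1 : ℕ) < j then 1 else 0)
          + (D a).toReal * (if a.2 = false ∧ j ≤ (a.1 : ℕ) then 1 else 0)) := by
    rintro ⟨x, y⟩
    by_cases hx : j ≤ (x : ℕ)
    · cases y <;>
        simp [Set.indicator_apply, Set.mem_setOf_eq, tauF, hx, Nat.not_lt.mpr hx,
          ENNReal.ofReal_toReal (PMF.apply_ne_top D _)]
    · cases y <;>
        simp [Set.indicator_apply, Set.mem_setOf_eq, tauF, hx, Nat.lt_of_not_le hx,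
          ENNReal.ofReal_toReal (PMF.apply_ne_top D _)]
  rw [Finset.sum_congr rfl fun a _ => hterm a,
    ← ENNReal.ofReal_sum_of_nonneg (fun a _ => by
      have := ENNReal.toReal_nonneg (a := D a)
      have h1 : (0:ℝ) ≤ (if a.2 = true ∧ (a.1 : ℕ) < j then (1:ℝ) else 0) := by split <;> norm_num
      have h2 : (0:ℝ) ≤ (if a.2 = false ∧ j ≤ (a.1 : ℕ) then (1:ℝ) else 0) := by split <;> norm_num
      nlinarith), Finset.sum_add_distrib]
  rfl



variable {t : ℕ} {D : PMF (Fin (t - 1) × Bool)}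

lemma exists_perfect (ht : 3 ≤ t) (hD : Realizable (thresholdClass t) D) :
    ∃ i : Fin t, pP D (i : ℕ) = 0 ∧ pM D (i : ℕ) = 0 := by
  obtain ⟨i0, -, hmin⟩ := Finset.exists_min_image (univ : Finset (Fin t))
    (fun i => pP D (i : ℕ) + pM D (i : ℕ)) ⟨⟨0, by omega⟩, mem_univ _⟩
  rcases le_or_gt (pP D (i0 : ℕ) + pM D (i0 : ℕ)) 0 with hc | hc
  · have hp := pP_nonneg (D := D) (i0 : ℕ)
    have hm := pM_nonneg (D := D) (i0 : ℕ)
    exact ⟨i0, by linarith, by linarith⟩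
  · exfalso
    obtain ⟨h, hmem, hloss⟩ := hD (ENNReal.ofReal (pP D (i0 : ℕ) + pM D (i0 : ℕ)))
      (by simpa [ENNReal.ofReal_pos] using hc)
    obtain ⟨i, rfl⟩ := hmem
    rw [show (fun x : Fin (t - 1) => decide ((i : ℕ) ≤ (x : ℕ))) = tauF t (i : ℕ) from rfl,
      popLoss_tauF] at hloss
    have h1 := (ENNReal.ofReal_lt_ofReal_iff hc).mp hloss
    have h2 := hmin i (mem_univ i)
    linarith

lemma sum_eq_abs_Gf {istar : ℕ} (h1 : pP D istar = 0) (h2 : pM D istar = 0) (j : ℕ) :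
    pP D j + pM D j = |Gf D j| := by
  rcases le_total j istar with hj | hj
  · have hp : pP D j = 0 :=
      le_antisymm (h1 ▸ pP_mono hj) (pP_nonneg j)
    have : Gf D j = -pM D j := by rw [Gf, hp]; ring
    rw [this, abs_neg, abs_of_nonneg (pM_nonneg j), hp]; ring
  · have hm : pM D j = 0 :=
      le_antisymm (h2 ▸ pM_anti hj) (pM_nonneg j)
    have : Gf D j = pP D j := by rw [Gf, hm]; ring
    rw [this, abs_of_nonneg (pP_nonneg j), hm]; ring

lemma Gf_istar {istar : ℕ} (h1 : pP D istar = 0) (h2 : pM D istar = 0) :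
    Gf D istar = 0 := by rw [Gf, h1, h2]; ring

/-! ### the clamped linear function ψ -/

noncomputable def psi (ε u : ℝ) : ℝ := max 0 (min 1 (u / ε + 1 / 2))

variable {ε : ℝ}

lemma psi_nonneg (u : ℝ) : 0 ≤ psi ε u := le_max_left _ _

lemma psi_le_one (u : ℝ) : psi ε u ≤ 1 := max_le zero_le_one (min_le_left _ _)

lemma psi_zero (hε : 0 < ε) {u : ℝ} (h : u ≤ -(ε / 2)) : psi ε u = 0 := by
  have h2 : u / ε ≤ -(1 / 2) := by
    rw [div_le_iff₀ hε]; nlinarith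
  exact max_eq_left (le_trans (min_le_right _ _) (by linarith))

lemma psi_one (hε : 0 < ε) {u : ℝ} (h : ε / 2 ≤ u) : psi ε u = 1 := by
  have h2 : (1 : ℝ) / 2 ≤ u / ε := by
    rw [le_div_iff₀ hε]; nlinarith
  have : min 1 (u / ε + 1 / 2) = 1 := min_eq_left (by linarith)
  rw [psi, this]; exact max_eq_right zero_le_one

lemma psi_le_half (hε : 0 < ε) {u : ℝ} (h : u ≤ 0) : psi ε u ≤ 1 / 2 := by
  have h2 : u / ε ≤ 0 := div_nonpos_of_nonpos_of_nonneg h hε.le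
  exact max_le (by norm_num) (le_trans (min_le_right _ _) (by linarith))

lemma half_le_psi (hε : 0 < ε) {u : ℝ} (h : 0 ≤ u) : 1 / 2 ≤ psi ε u := by
  have h2 : 0 ≤ u / ε := div_nonneg h hε.le
  exact le_max_of_le_right (le_min (by norm_num) (by linarith))

lemma abs_min_sub_min (a b c : ℝ) : |min a c - min b c| ≤ |a - b| := by
  rcases le_total a c with h1 | h1 <;> rcases le_total b c with h2 | h2 <;>
    rw [abs_le] <;>
    refine ⟨?_, ?_⟩ <;>
    simp only [min_eq_left, min_eq_right, h1, h2] <;>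
    cases abs_cases (a - b) <;> linarith

lemma psi_lip (hε : 0 < ε) (a b : ℝ) : |psi ε a - psi ε b| ≤ |a - b| / ε := by
  have h1 : |psi ε a - psi ε b| ≤ |min 1 (a / ε + 1 / 2) - min 1 (b / ε + 1 / 2)| := by
    rw [psi, psi, max_comm 0 _, max_comm 0 _]
    exact abs_max_sub_max_le_abs _ _ _
  have h2 : |min 1 (a / ε + 1 / 2) - min 1 (b / ε + 1 / 2)| ≤ |a / ε - b / ε| := by
    rw [min_comm 1 _, min_comm 1 _]
    have := abs_min_sub_min (a / ε + 1 / 2) (b / ε + 1 / 2) 1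
    calc |min (a / ε + 1 / 2) 1 - min (b / ε + 1 / 2) 1| ≤ |a / ε + 1 / 2 - (b / ε + 1 / 2)| := this
    _ = |a / ε - b / ε| := by ring_nf
  have h3 : |a / ε - b / ε| = |a - b| / ε := by
    rw [div_sub_div_same, abs_div, abs_of_pos hε]
  linarith




/-! ### generic product-sum identity -/

lemma sum_prod_fn {n : ℕ} {α β : Type*} [Fintype α] [DecidableEq α] [CommSemiring β]
    (F : Fin n → α → β) :
    ∑ S : Fin n → α, ∏ i, F i (S i) = ∏ i, ∑ a, F i a := by
  rw [Finset.prod_univ_sum, Fintype.piFinset_univ]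

/-! ### outProb helpers -/

variable {X : Type*} [Fintype X] [DecidableEq X] {n : ℕ}

lemma pmf_toOuterMeasure_le_one {α : Type*} (p : PMF α) (E : Set α) :
    p.toOuterMeasure E ≤ 1 := by
  rw [PMF.toOuterMeasure_apply]
  calc ∑' a, E.indicator (⇑p) a ≤ ∑' a, p a :=
        ENNReal.tsum_le_tsum (fun a => Set.indicator_le_self E (⇑p) a)
  _ = 1 := p.tsum_coe

lemma pmf_toOuterMeasure_add_compl {α : Type*} (p : PMF α) (E : Set α) :
    p.toOuterMeasure E + p.toOuterMeasure Eᶜ = 1 := by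
  rw [PMF.toOuterMeasure_apply, PMF.toOuterMeasure_apply, ← ENNReal.tsum_add]
  rw [tsum_congr (fun a => show E.indicator (⇑p) a + Eᶜ.indicator (⇑p) a = p a by
    by_cases h : a ∈ E <;> simp [Set.indicator_apply, h])]
  exact p.tsum_coe

lemma sum_prod_pmf (D : PMF (X × Bool)) (n : ℕ) :
    ∑ S : Sample X n, (∏ i, D (S i)) = 1 := by
  have h1 : ∑ a : X × Bool, D a = 1 := by
    have h := D.tsum_coe; rwa [tsum_fintype] at h
  rw [sum_prod_fn (fun _ a => D a)]
  simp [h1]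

lemma outProb_eq_sum (D : PMF (X × Bool)) (A : Sample X n → PMF (X → Bool)) (E : Set (X → Bool)) :
    outProb D A E = ∑ S : Sample X n, (∏ i, D (S i)) * (A S).toOuterMeasure E :=
  tsum_fintype _

lemma outProb_mono (D : PMF (X × Bool)) (A : Sample X n → PMF (X → Bool))
    {E E' : Set (X → Bool)} (h : E ⊆ E') : outProb D A E ≤ outProb D A E' := by
  rw [outProb_eq_sum, outProb_eq_sum]
  exact Finset.sum_le_sum fun S _ =>
    mul_le_mul_right ((A S).toOuterMeasure.mono h) _

lemma outProb_add_compl (D : PMF (X × Bool)) (A : Sample X n → PMF (X → Bool))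
    (E : Set (X → Bool)) : outProb D A E + outProb D A Eᶜ = 1 := by
  rw [outProb_eq_sum, outProb_eq_sum, ← Finset.sum_add_distrib]
  rw [Finset.sum_congr rfl (fun S _ => by
    rw [← mul_add, pmf_toOuterMeasure_add_compl, mul_one])]
  exact sum_prod_pmf D n

lemma outProb_le_one (D : PMF (X × Bool)) (A : Sample X n → PMF (X → Bool))
    (E : Set (X → Bool)) : outProb D A E ≤ 1 := by
  rw [← outProb_add_compl D A E]
  exact le_self_add

lemma outProb_ne_top (D : PMF (X × Bool)) (A : Sample X n → PMF (X → Bool))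
    (E : Set (X → Bool)) : outProb D A E ≠ ⊤ :=
  ne_top_of_le_ne_top ENNReal.one_ne_top (outProb_le_one D A E)

lemma prod_pmf_ne_top (D : PMF (X × Bool)) (S : Sample X n) :
    (∏ i, D (S i)) ≠ ⊤ :=
  ENNReal.prod_ne_top fun i _ => PMF.apply_ne_top D (S i)

lemma prod_pmf_eq_ofReal (D : PMF (X × Bool)) (S : Sample X n) :
    (∏ i, D (S i)) = ENNReal.ofReal (∏ i, (D (S i)).toReal) := by
  rw [← ENNReal.toReal_prod, ENNReal.ofReal_toReal (prod_pmf_ne_top D S)]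

lemma outProb_toReal (D : PMF (X × Bool)) (A : Sample X n → PMF (X → Bool))
    (E : Set (X → Bool)) :
    (outProb D A E).toReal
      = ∑ S : Sample X n, (∏ i, (D (S i)).toReal) * ((A S).toOuterMeasure E).toReal := by
  rw [outProb_eq_sum, ENNReal.toReal_sum (fun S _ =>
    ENNReal.mul_ne_top (prod_pmf_ne_top D S)
      (ne_top_of_le_ne_top ENNReal.one_ne_top (pmf_toOuterMeasure_le_one _ _)))]
  exact Finset.sum_congr rfl fun S _ => by
    rw [ENNReal.toReal_mul, ENNReal.toReal_prod]



variable {t : ℕ} {D : PMF (Fin (t - 1) × Bool)}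

noncomputable def gv {t : ℕ} (j : ℕ) (a : Fin (t - 1) × Bool) : ℝ :=
  (if a.2 = true ∧ (a.1 : ℕ) < j then 1 else 0) - (if a.2 = false ∧ j ≤ (a.1 : ℕ) then 1 else 0)

lemma abs_gv_le_one (j : ℕ) (a : Fin (t - 1) × Bool) : |gv j a| ≤ 1 := by
  rcases a with ⟨x, y⟩
  cases y <;> simp only [gv] <;> split <;> split <;> simp_all <;> norm_num

lemma Gf_eq_sum_gv (j : ℕ) : Gf D j = ∑ a : Fin (t - 1) × Bool, (D a).toReal * gv j a := by
  rw [Gf, pP, pM, ← Finset.sum_sub_distrib]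
  exact Finset.sum_congr rfl fun a _ => by rw [gv, mul_sub]

noncomputable def Ghat {t n : ℕ} (S : Sample (Fin (t - 1)) n) (j : ℕ) : ℝ :=
  (∑ i, gv j (S i)) / n

/-- second moment bound -/
lemma second_moment (n : ℕ) (Z : Fin (t - 1) × Bool → ℝ)
    (hZ0 : ∑ a : Fin (t - 1) × Bool, (D a).toReal * Z a = 0)
    (hZ2 : ∀ a, Z a * Z a ≤ 4) :
    ∑ S : Sample (Fin (t - 1)) n, (∏ i, (D (S i)).toReal) *
      ((∑ i, Z (S i)) * (∑ i, Z (S i))) ≤ 4 * n := by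
  classical
  have hsum1 : ∑ a : Fin (t - 1) × Bool, (D a).toReal = 1 := sum_pmf_toReal D
  have hZ2' : ∀ a, (D a).toReal * (Z a * Z a) ≤ (D a).toReal * 4 := fun a =>
    mul_le_mul_of_nonneg_left (hZ2 a) ENNReal.toReal_nonneg
  -- the per-pair expectation
  have hpair : ∀ i k : Fin n,
      (∑ S : Sample (Fin (t - 1)) n, (∏ c, (D (S c)).toReal) * (Z (S i) * Z (S k)))
      = ∏ c, ∑ a : Fin (t - 1) × Bool,
          (D a).toReal * ((if c = i then Z a else 1) * (if c = k then Z a else 1)) := by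
    intro i k
    rw [← sum_prod_fn (fun c a => (D a).toReal * ((if c = i then Z a else 1) * (if c = k then Z a else 1)))]
    refine Finset.sum_congr rfl fun S _ => ?_
    rw [Finset.prod_mul_distrib, Finset.prod_mul_distrib,
      Finset.prod_ite_eq' Finset.univ i (fun c => Z (S c)),
      Finset.prod_ite_eq' Finset.univ k (fun c => Z (S c))]
    simp only [Finset.mem_univ, if_true]
  have hoff : ∀ i k : Fin n, i ≠ k →
      (∑ S : Sample (Fin (t - 1)) n, (∏ c, (D (S c)).toReal) * (Z (S i) * Z (S k))) = 0 := by
    intro i k hik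
    rw [hpair i k]
    refine Finset.prod_eq_zero (Finset.mem_univ i) ?_
    rw [show (∑ a : Fin (t - 1) × Bool,
        (D a).toReal * ((if i = i then Z a else 1) * (if i = k then Z a else 1)))
      = ∑ a : Fin (t - 1) × Bool, (D a).toReal * Z a from
      Finset.sum_congr rfl fun a _ => by rw [if_pos rfl, if_neg hik, mul_one]]
    exact hZ0
  have hdiag : ∀ i : Fin n,
      (∑ S : Sample (Fin (t - 1)) n, (∏ c, (D (S c)).toReal) * (Z (S i) * Z (S i))) ≤ 4 := by
    intro i
    rw [hpair i i]
    rw [Finset.prod_eq_single i (fun c _ hc => by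
        rw [show (∑ a : Fin (t - 1) × Bool,
            (D a).toReal * ((if c = i then Z a else 1) * (if c = i then Z a else 1)))
          = ∑ a : Fin (t - 1) × Bool, (D a).toReal from
          Finset.sum_congr rfl fun a _ => by rw [if_neg hc, one_mul, mul_one]]
        exact hsum1)
      (fun h => absurd (Finset.mem_univ i) h)]
    rw [show (∑ a : Fin (t - 1) × Bool,
        (D a).toReal * ((if i = i then Z a else 1) * (if i = i then Z a else 1)))
      = ∑ a : Fin (t - 1) × Bool, (D a).toReal * (Z a * Z a) from
      Finset.sum_congr rfl fun a _ => by rw [if_pos rfl]]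
    calc ∑ a : Fin (t - 1) × Bool, (D a).toReal * (Z a * Z a)
        ≤ ∑ a : Fin (t - 1) × Bool, (D a).toReal * 4 := Finset.sum_le_sum fun a _ => hZ2' a
    _ = 4 := by rw [← Finset.sum_mul, hsum1, one_mul]
  -- expand the square
  have hexp : ∑ S : Sample (Fin (t - 1)) n, (∏ c, (D (S c)).toReal) *
      ((∑ i, Z (S i)) * (∑ i, Z (S i)))
      = ∑ i : Fin n, ∑ k : Fin n,
          ∑ S : Sample (Fin (t - 1)) n, (∏ c, (D (S c)).toReal) * (Z (S i) * Z (S k)) := by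
    simp_rw [Finset.sum_mul_sum, Finset.mul_sum]
    rw [Finset.sum_comm]
    exact Finset.sum_congr rfl fun i _ => Finset.sum_comm
  rw [hexp]
  calc ∑ i : Fin n, ∑ k : Fin n,
        ∑ S : Sample (Fin (t - 1)) n, (∏ c, (D (S c)).toReal) * (Z (S i) * Z (S k))
      ≤ ∑ i : Fin n, ∑ k : Fin n, (if i = k then 4 else 0) := by
        refine Finset.sum_le_sum fun i _ => Finset.sum_le_sum fun k _ => ?_
        by_cases hik : i = k
        · subst hik; rw [if_pos rfl]; exact hdiag i
        · rw [if_neg hik, hoff i k hik]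
  _ = ∑ i : Fin n, 4 := by
        refine Finset.sum_congr rfl fun i _ => ?_
        rw [Finset.sum_ite_eq Finset.univ i (fun _ => (4:ℝ)), if_pos (Finset.mem_univ i)]
  _ = 4 * n := by rw [Finset.sum_const, Finset.card_univ, Fintype.card_fin, nsmul_eq_mul]; ring



variable {t : ℕ} {D : PMF (Fin (t - 1) × Bool)}

lemma cheb_bad (n : ℕ) (hn : 0 < n) (j : ℕ) {γ : ℝ} (hγ : 0 < γ) :
    ∑ S ∈ Finset.univ.filter (fun S : Sample (Fin (t - 1)) n => γ < |Ghat S j - Gf D j|),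
      (∏ i, (D (S i)).toReal) ≤ 4 / (n * γ ^ 2) := by
  classical
  set Z : Fin (t - 1) × Bool → ℝ := fun a => gv j a - Gf D j with hZ
  have hn' : (0:ℝ) < n := Nat.cast_pos.mpr hn
  have hZ0 : ∑ a : Fin (t - 1) × Bool, (D a).toReal * Z a = 0 := by
    simp only [hZ, mul_sub]
    rw [Finset.sum_sub_distrib, ← Gf_eq_sum_gv, ← Finset.sum_mul, sum_pmf_toReal, one_mul,
      sub_self]
  have hZ2 : ∀ a, Z a * Z a ≤ 4 := by
    intro a
    have h1 := abs_le.mp (abs_gv_le_one (t := t) j a)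
    have h2 := abs_le.mp (abs_Gf_le_one (D := D) j)
    simp only [hZ]
    nlinarith [h1.1, h1.2, h2.1, h2.2]
  have hbig := second_moment (D := D) n Z hZ0 hZ2
  have hw : ∀ S : Sample (Fin (t - 1)) n, 0 ≤ ∏ i, (D (S i)).toReal := fun S =>
    Finset.prod_nonneg fun i _ => ENNReal.toReal_nonneg
  set C : ℝ := ((n : ℝ) * γ) * ((n : ℝ) * γ) with hC
  have hCpos : 0 < C := by positivity
  have hkey : ∀ S ∈ Finset.univ.filter
      (fun S : Sample (Fin (t - 1)) n => γ < |Ghat S j - Gf D j|),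
      (∏ i, (D (S i)).toReal)
        ≤ (∏ i, (D (S i)).toReal) * (((∑ i, Z (S i)) * (∑ i, Z (S i))) / C) := by
    intro S hS
    rw [Finset.mem_filter] at hS
    have hx := hS.2
    have hsumZ : ∑ i, Z (S i) = n * (Ghat S j - Gf D j) := by
      simp only [hZ]
      rw [Finset.sum_sub_distrib, Finset.sum_const, Finset.card_univ, Fintype.card_fin,
        nsmul_eq_mul, Ghat]
      field_simp
    have h6 : C < ((n : ℝ) * |Ghat S j - Gf D j|) * ((n : ℝ) * |Ghat S j - Gf D j|) :=
      mul_self_lt_mul_self (by positivity) (by nlinarith)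
    have h7 : ((n : ℝ) * |Ghat S j - Gf D j|) * ((n : ℝ) * |Ghat S j - Gf D j|)
        = (∑ i, Z (S i)) * (∑ i, Z (S i)) := by
      rw [hsumZ]
      linear_combination ((n : ℝ) * (n : ℝ)) * abs_mul_abs_self (Ghat S j - Gf D j)
    have h8 : (1 : ℝ) ≤ ((∑ i, Z (S i)) * (∑ i, Z (S i))) / C := by
      rw [le_div_iff₀ hCpos]
      nlinarith
    calc (∏ i, (D (S i)).toReal) = (∏ i, (D (S i)).toReal) * 1 := (mul_one _).symm
    _ ≤ _ := mul_le_mul_of_nonneg_left h8 (hw S)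
  calc ∑ S ∈ Finset.univ.filter
        (fun S : Sample (Fin (t - 1)) n => γ < |Ghat S j - Gf D j|),
        (∏ i, (D (S i)).toReal)
      ≤ ∑ S ∈ Finset.univ.filter
        (fun S : Sample (Fin (t - 1)) n => γ < |Ghat S j - Gf D j|),
        (∏ i, (D (S i)).toReal) * (((∑ i, Z (S i)) * (∑ i, Z (S i))) / C) :=
        Finset.sum_le_sum hkey
  _ ≤ ∑ S : Sample (Fin (t - 1)) n,
        (∏ i, (D (S i)).toReal) * (((∑ i, Z (S i)) * (∑ i, Z (S i))) / C) :=
        Finset.sum_le_sum_of_subset_of_nonneg (Finset.filter_subset _ _)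
          (fun S _ _ => mul_nonneg (hw S) (div_nonneg (mul_self_nonneg _) hCpos.le))
  _ = (∑ S : Sample (Fin (t - 1)) n,
        (∏ i, (D (S i)).toReal) * ((∑ i, Z (S i)) * (∑ i, Z (S i)))) / C := by
        rw [Finset.sum_congr rfl (fun (S : Sample (Fin (t - 1)) n) _ =>
          (mul_div_assoc (∏ i, (D (S i)).toReal)
            ((∑ i, Z (S i)) * (∑ i, Z (S i))) C).symm), Finset.sum_div]
  _ ≤ (4 * n) / C := by
        exact (div_le_div_iff_of_pos_right hCpos).mpr hbig
  _ = 4 / (n * γ ^ 2) := by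
        rw [hC]; field_simp

lemma bad_union (n : ℕ) (hn : 0 < n) {γ : ℝ} (hγ : 0 < γ) :
    ∑ S ∈ Finset.univ.filter (fun S : Sample (Fin (t - 1)) n =>
        ¬ ∀ j < t, |Ghat S j - Gf D j| ≤ γ), (∏ i, (D (S i)).toReal)
      ≤ t * (4 / (n * γ ^ 2)) := by
  classical
  have hw : ∀ S : Sample (Fin (t - 1)) n, 0 ≤ ∏ i, (D (S i)).toReal := fun S =>
    Finset.prod_nonneg fun i _ => ENNReal.toReal_nonneg
  have h1 : ∑ S ∈ Finset.univ.filter (fun S : Sample (Fin (t - 1)) n =>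
        ¬ ∀ j < t, |Ghat S j - Gf D j| ≤ γ), (∏ i, (D (S i)).toReal)
      ≤ ∑ S : Sample (Fin (t - 1)) n, ∑ j ∈ range t,
          (if γ < |Ghat S j - Gf D j| then (∏ i, (D (S i)).toReal) else 0) := by
    rw [Finset.sum_filter]
    refine Finset.sum_le_sum fun S _ => ?_
    by_cases hb : ∀ j < t, |Ghat S j - Gf D j| ≤ γ
    · rw [if_neg (not_not_intro hb)]
      exact Finset.sum_nonneg fun j _ => by split <;> [exact hw S; exact le_rfl]
    · rw [if_pos hb]
      push_neg at hb
      obtain ⟨j0, hj0t, hj0⟩ := hb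
      have := Finset.single_le_sum (f := fun j =>
          (if γ < |Ghat S j - Gf D j| then (∏ i, (D (S i)).toReal) else 0))
        (fun j _ => by split <;> [exact hw S; exact le_rfl])
        (Finset.mem_range.mpr hj0t)
      rw [if_pos hj0] at this
      exact this
  have h2 : ∑ S : Sample (Fin (t - 1)) n, ∑ j ∈ range t,
          (if γ < |Ghat S j - Gf D j| then (∏ i, (D (S i)).toReal) else 0)
      = ∑ j ∈ range t, ∑ S : Sample (Fin (t - 1)) n,
          (if γ < |Ghat S j - Gf D j| then (∏ i, (D (S i)).toReal) else 0) :=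
    Finset.sum_comm
  calc _ ≤ _ := h1
  _ = _ := h2
  _ ≤ ∑ j ∈ range t, 4 / (n * γ ^ 2) := by
      refine Finset.sum_le_sum fun j _ => ?_
      rw [← Finset.sum_filter]
      exact cheb_bad n hn j hγ
  _ = t * (4 / (n * γ ^ 2)) := by
      rw [Finset.sum_const, Finset.card_range, nsmul_eq_mul]



variable {t : ℕ} {D : PMF (Fin (t - 1) × Bool)} {ε : ℝ}

noncomputable def vfn (ε : ℝ) (t : ℕ) (D : PMF (Fin (t - 1) × Bool)) : ℝ :=
  ∑ j ∈ range t, psi ε (Gf D j)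

noncomputable def vhat (ε : ℝ) (t : ℕ) {n : ℕ} (S : Sample (Fin (t - 1)) n) : ℝ :=
  ∑ j ∈ range t, psi ε (Ghat S j)

lemma vfn_lb (ht : 3 ≤ t) (hε : 0 < ε) {istar : Fin t}
    (h1 : pP D (istar : ℕ) = 0) (h2 : pM D (istar : ℕ) = 0) :
    1 / 2 ≤ vfn ε t D := by
  have hG : 0 ≤ Gf D (t - 1) := by
    rw [← Gf_istar h1 h2]
    exact Gf_mono (by have := istar.isLt; omega)
  calc (1:ℝ)/2 ≤ psi ε (Gf D (t - 1)) := half_le_psi hε hG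
  _ ≤ vfn ε t D := Finset.single_le_sum (f := fun j => psi ε (Gf D j))
      (fun j _ => psi_nonneg _) (Finset.mem_range.mpr (by omega))

lemma vfn_ub (ht : 3 ≤ t) (hε : 0 < ε) {istar : Fin t}
    (h1 : pP D (istar : ℕ) = 0) (h2 : pM D (istar : ℕ) = 0) :
    vfn ε t D ≤ (t : ℝ) - 1 / 2 := by
  have hG : Gf D 0 ≤ 0 := by
    rw [← Gf_istar h1 h2]
    exact Gf_mono (Nat.zero_le _)
  have hsplit : vfn ε t D = psi ε (Gf D 0) + ∑ j ∈ Ico 1 t, psi ε (Gf D j) := by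
    rw [vfn, Finset.range_eq_Ico]
    exact Finset.sum_eq_sum_Ico_succ_bot (by omega) _
  have hrest : ∑ j ∈ Ico 1 t, psi ε (Gf D j) ≤ ((t - 1 : ℕ) : ℝ) := by
    have := Finset.sum_le_card_nsmul (Ico 1 t) (fun j => psi ε (Gf D j)) 1
      (fun j _ => psi_le_one _)
    rw [Nat.card_Ico] at this
    simpa [nsmul_eq_mul] using this
  have hh : psi ε (Gf D 0) ≤ 1 / 2 := psi_le_half hε hG
  have hcast : ((t - 1 : ℕ) : ℝ) = (t : ℝ) - 1 := by
    rw [Nat.cast_sub (by omega), Nat.cast_one]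
  linarith

lemma good_index (ht : 3 ≤ t) (hε : 0 < ε) {istar : Fin t}
    (h1 : pP D (istar : ℕ) = 0) (h2 : pM D (istar : ℕ) = 0)
    {q : ℕ} (hq : q ≤ t - 1)
    (hql : vfn ε t D - 9 / 8 < q) (hqu : (q : ℝ) ≤ vfn ε t D + 1 / 8) :
    |Gf D (t - 1 - q)| ≤ ε := by
  set jj := t - 1 - q with hjjdef
  have hzero : Gf D (istar : ℕ) = 0 := Gf_istar h1 h2
  have hii := istar.isLt
  by_contra hbad
  rw [not_le] at hbad
  rcases lt_abs.mp hbad with hgt | hlt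
  · -- Gf D jj > ε
    have hjgt : (istar : ℕ) < jj := by
      by_contra hc
      push_neg at hc
      have := Gf_mono (D := D) hc
      linarith
    obtain ⟨j1, hj1⟩ : ∃ j1, jj = j1 + 1 := ⟨jj - 1, by omega⟩
    have hG1 : 0 ≤ Gf D j1 := by
      rw [← hzero]; exact Gf_mono (by omega)
    have hones : ∀ l ∈ Ico jj t, 1 ≤ psi ε (Gf D l) := by
      intro l hl
      rw [mem_Ico] at hl
      rw [psi_one hε (by
        have := Gf_mono (D := D) hl.1
        linarith)]
    have hsub : Ico j1 t ⊆ range t := by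
      intro l hl; rw [mem_Ico] at hl; rw [mem_range]; omega
    have hv1 : ∑ l ∈ Ico j1 t, psi ε (Gf D l) ≤ vfn ε t D :=
      Finset.sum_le_sum_of_subset_of_nonneg hsub (fun l _ _ => psi_nonneg _)
    have hsplit : ∑ l ∈ Ico j1 t, psi ε (Gf D l)
        = psi ε (Gf D j1) + ∑ l ∈ Ico jj t, psi ε (Gf D l) := by
      rw [hj1]
      exact Finset.sum_eq_sum_Ico_succ_bot (by omega) _
    have hcnt : (((t - jj) : ℕ) : ℝ) ≤ ∑ l ∈ Ico jj t, psi ε (Gf D l) := by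
      have := Finset.card_nsmul_le_sum (Ico jj t) (fun l => psi ε (Gf D l)) 1 hones
      rw [Nat.card_Ico] at this
      simpa [nsmul_eq_mul] using this
    have hcount : ((t - jj : ℕ) : ℝ) = (q : ℝ) + 1 := by
      have h9 : t - jj = q + 1 := by omega
      rw [h9]; push_cast; ring
    have hhalf : 1 / 2 ≤ psi ε (Gf D j1) := half_le_psi hε hG1
    linarith
  · -- Gf D jj < -ε
    have hlt' : Gf D jj < -ε := by linarith
    have hjlt : jj < (istar : ℕ) := by
      by_contra hc
      push_neg at hc
      have := Gf_mono (D := D) hc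
      linarith
    have hGj1 : Gf D (jj + 1) ≤ 0 := by
      rw [← hzero]; exact Gf_mono (by omega)
    have hzeros : ∀ l ∈ range (jj + 1), psi ε (Gf D l) = 0 := by
      intro l hl
      rw [mem_range] at hl
      refine psi_zero hε ?_
      have := Gf_mono (D := D) (show l ≤ jj by omega)
      linarith
    have hvsplit : vfn ε t D = ∑ l ∈ range (jj + 1), psi ε (Gf D l)
        + ∑ l ∈ Ico (jj + 1) t, psi ε (Gf D l) :=
      (Finset.sum_range_add_sum_Ico _ (by omega)).symm
    have hzsum : ∑ l ∈ range (jj + 1), psi ε (Gf D l) = 0 := Finset.sum_eq_zero hzeros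
    have hsplit2 : ∑ l ∈ Ico (jj + 1) t, psi ε (Gf D l)
        = psi ε (Gf D (jj + 1)) + ∑ l ∈ Ico (jj + 2) t, psi ε (Gf D l) :=
      Finset.sum_eq_sum_Ico_succ_bot (by omega) _
    have hrest : ∑ l ∈ Ico (jj + 2) t, psi ε (Gf D l) ≤ ((t - (jj + 2) : ℕ) : ℝ) := by
      have := Finset.sum_le_card_nsmul (Ico (jj + 2) t) (fun l => psi ε (Gf D l)) 1
        (fun l _ => psi_le_one _)
      rw [Nat.card_Ico] at this
      simpa [nsmul_eq_mul] using this
    have hq1 : 1 ≤ q := by omega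
    have hcount : ((t - (jj + 2) : ℕ) : ℝ) = (q : ℝ) - 1 := by
      have h9 : t - (jj + 2) = q - 1 := by omega
      rw [h9, Nat.cast_sub hq1, Nat.cast_one]
    have hh : psi ε (Gf D (jj + 1)) ≤ 1 / 2 := psi_le_half hε hGj1
    linarith




lemma threshold_upper (t : ℕ) (ht : 3 ≤ t) (ε : ℝ) (hε : 0 < ε) :
    ∃ A : LearningRule (Fin (t - 1)), IsListLearner (thresholdClass t) A ε 2 := by
  classical
  have ht0 : (0 : ℝ) < t := by exact_mod_cast (show 0 < t by omega)
  set γ : ℝ := ε / (8 * t) with hγdef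
  have hγ : 0 < γ := by rw [hγdef]; positivity
  refine ⟨fun n S => PMF.pure (tauF t (t - 1 - min (t - 1) (Nat.floor (vhat ε t S)))), ?_⟩
  intro δ hδ
  obtain ⟨n, hn1, hnb⟩ : ∃ n : ℕ, 0 < n ∧ (t : ℝ) * (4 / (n * γ ^ 2)) ≤ δ := by
    refine ⟨Nat.ceil ((4 * t) / (γ ^ 2 * δ)) + 1, Nat.succ_pos _, ?_⟩
    set m := Nat.ceil ((4 * (t:ℝ)) / (γ ^ 2 * δ)) + 1 with hmdef
    have hm0 : (0:ℝ) < m := by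
      have : 0 < m := by omega
      exact_mod_cast this
    have hge : (4 * (t:ℝ)) / (γ ^ 2 * δ) ≤ (m : ℝ) := by
      calc (4 * (t:ℝ)) / (γ ^ 2 * δ) ≤ (Nat.ceil ((4 * (t:ℝ)) / (γ ^ 2 * δ)) : ℝ) :=
            Nat.le_ceil _
      _ ≤ m := by rw [hmdef]; push_cast; linarith
    have hpos : (0:ℝ) < γ ^ 2 * δ := by positivity
    rw [div_le_iff₀ hpos] at hge
    have hng : (0:ℝ) < (m:ℝ) * γ ^ 2 := by positivity
    have heq : (t:ℝ) * (4 / ((m:ℝ) * γ ^ 2)) = (4 * t) / ((m:ℝ) * γ ^ 2) := by ring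
    rw [heq, div_le_iff₀ hng]
    nlinarith [hge]
  refine ⟨n, fun D hD => ?_⟩
  obtain ⟨istar, hi1, hi2⟩ := exists_perfect ht hD
  set v := vfn ε t D with hvdef
  have hvlb : 1/2 ≤ v := vfn_lb ht hε hi1 hi2
  have hvub : v ≤ (t:ℝ) - 1/2 := vfn_ub ht hε hi1 hi2
  have hv18 : (0:ℝ) ≤ v - 1/8 := by linarith
  set f1 := Nat.floor (v - 1/8) with hf1def
  set f2 := Nat.floor (v + 1/8) with hf2def
  set q1 := min (t - 1) f1 with hq1def
  set q2 := min (t - 1) f2 with hq2def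
  have hf12 : f1 ≤ f2 := Nat.floor_mono (by linarith)
  have hf21 : f2 ≤ f1 + 1 := by
    rw [hf2def, hf1def, ← Nat.floor_add_one hv18]
    exact Nat.floor_mono (by linarith)
  have hq12 : q1 ≤ q2 := min_le_min le_rfl hf12
  have hq1t : q1 ≤ t - 1 := min_le_left _ _
  have hq2t : q2 ≤ t - 1 := min_le_left _ _
  have hcast : ((t - 1 : ℕ) : ℝ) = (t : ℝ) - 1 := by
    rw [Nat.cast_sub (by omega), Nat.cast_one]
  have hq1u : (q1 : ℝ) ≤ v + 1/8 := by
    calc (q1:ℝ) ≤ (f1:ℝ) := by exact_mod_cast min_le_right _ _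
    _ ≤ v - 1/8 := Nat.floor_le hv18
    _ ≤ v + 1/8 := by linarith
  have hq2u : (q2:ℝ) ≤ v + 1/8 := by
    calc (q2:ℝ) ≤ (f2:ℝ) := by exact_mod_cast min_le_right _ _
    _ ≤ v + 1/8 := Nat.floor_le (by linarith)
  have hq1l : v - 9/8 < (q1:ℝ) := by
    rcases min_cases (t - 1) f1 with ⟨heq, -⟩ | ⟨heq, -⟩
    · rw [hq1def, heq, hcast]; linarith
    · rw [hq1def, heq]
      have h9 := Nat.lt_floor_add_one (v - 1/8)
      rw [← hf1def] at h9
      linarith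
  have hq2l : v - 9/8 < (q2:ℝ) :=
    lt_of_lt_of_le hq1l (by exact_mod_cast hq12)
  have hgoodq : ∀ q : ℕ, q ≤ t - 1 → v - 9/8 < (q:ℝ) → (q:ℝ) ≤ v + 1/8 →
      popLoss D (tauF t (t - 1 - q)) ≤ ENNReal.ofReal ε := by
    intro q hq hl hu
    rw [popLoss_tauF, sum_eq_abs_Gf hi1 hi2]
    exact ENNReal.ofReal_le_ofReal (good_index ht hε hi1 hi2 hq hl hu)
  refine ⟨fun ℓ : Fin 2 => if ℓ = 0 then tauF t (t - 1 - q1) else tauF t (t - 1 - q2),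
    fun ℓ => ?_, ?_⟩
  · by_cases hℓ : ℓ = 0
    · subst hℓ
      simpa using hgoodq q1 hq1t hq1l hq1u
    · simpa [hℓ] using hgoodq q2 hq2t hq2l hq2u
  · -- probability bound
    have hmem : ∀ S : Sample (Fin (t-1)) n, (∀ j < t, |Ghat S j - Gf D j| ≤ γ) →
        tauF t (t - 1 - min (t - 1) (Nat.floor (vhat ε t S))) ∈
          Set.range (fun ℓ : Fin 2 =>
            if ℓ = 0 then tauF t (t - 1 - q1) else tauF t (t - 1 - q2)) := by
      intro S hS
      have hdiff : |vhat ε t S - v| ≤ 1/8 := by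
        rw [hvdef, vhat, vfn, ← Finset.sum_sub_distrib]
        calc |∑ j ∈ range t, (psi ε (Ghat S j) - psi ε (Gf D j))|
            ≤ ∑ j ∈ range t, |psi ε (Ghat S j) - psi ε (Gf D j)| :=
              Finset.abs_sum_le_sum_abs _ _
        _ ≤ ∑ j ∈ range t, γ / ε := Finset.sum_le_sum fun j hj => by
            refine le_trans (psi_lip hε _ _) ?_
            exact (div_le_div_iff_of_pos_right hε).mpr (hS j (Finset.mem_range.mp hj))
        _ = t * (γ / ε) := by rw [Finset.sum_const, Finset.card_range, nsmul_eq_mul]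
        _ = 1/8 := by rw [hγdef]; field_simp
      have habs := abs_le.mp hdiff
      have hfl : f1 ≤ Nat.floor (vhat ε t S) := by
        rw [hf1def]; exact Nat.floor_mono (by linarith [habs.1, habs.2])
      have hfu : Nat.floor (vhat ε t S) ≤ f2 := by
        rw [hf2def]; exact Nat.floor_mono (by linarith [habs.1, habs.2])
      have hor : min (t - 1) (Nat.floor (vhat ε t S)) = q1
          ∨ min (t - 1) (Nat.floor (vhat ε t S)) = q2 := by
        rw [hq1def, hq2def]; omega
      rcases hor with h | h
      · exact ⟨0, by simp [h]⟩
      · exact ⟨1, by simp [h]⟩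
    rw [outProb_eq_sum]
    have hsplit := Finset.sum_filter_add_sum_filter_not (Finset.univ : Finset (Sample (Fin (t-1)) n))
      (fun S => ∀ j < t, |Ghat S j - Gf D j| ≤ γ) (fun S => ∏ i, D (S i))
    have htot : ∑ S : Sample (Fin (t-1)) n, (∏ i, D (S i)) = 1 := sum_prod_pmf D n
    have hbadR := le_trans (bad_union (D := D) n hn1 hγ) hnb
    have hbadE : ∑ S ∈ Finset.univ.filter (fun S : Sample (Fin (t-1)) n =>
        ¬ ∀ j < t, |Ghat S j - Gf D j| ≤ γ), (∏ i, D (S i)) ≤ ENNReal.ofReal δ := by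
      calc ∑ S ∈ Finset.univ.filter (fun S : Sample (Fin (t-1)) n =>
            ¬ ∀ j < t, |Ghat S j - Gf D j| ≤ γ), (∏ i, D (S i))
          = ENNReal.ofReal (∑ S ∈ Finset.univ.filter (fun S : Sample (Fin (t-1)) n =>
            ¬ ∀ j < t, |Ghat S j - Gf D j| ≤ γ), ∏ i, (D (S i)).toReal) := by
            rw [ENNReal.ofReal_sum_of_nonneg (fun S _ =>
              Finset.prod_nonneg fun i _ => ENNReal.toReal_nonneg)]
            exact Finset.sum_congr rfl fun S _ => prod_pmf_eq_ofReal D S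
      _ ≤ ENNReal.ofReal δ := ENNReal.ofReal_le_ofReal hbadR
    have hbadTop : ∑ S ∈ Finset.univ.filter (fun S : Sample (Fin (t-1)) n =>
        ¬ ∀ j < t, |Ghat S j - Gf D j| ≤ γ), (∏ i, D (S i)) ≠ ⊤ :=
      ne_top_of_le_ne_top ENNReal.ofReal_ne_top hbadE
    have hgoodE : ∑ S ∈ Finset.univ.filter (fun S : Sample (Fin (t-1)) n =>
          ∀ j < t, |Ghat S j - Gf D j| ≤ γ), (∏ i, D (S i))
        = 1 - ∑ S ∈ Finset.univ.filter (fun S : Sample (Fin (t-1)) n =>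
          ¬ ∀ j < t, |Ghat S j - Gf D j| ≤ γ), (∏ i, D (S i)) :=
      ENNReal.eq_sub_of_add_eq hbadTop (hsplit.trans htot)
    calc ENNReal.ofReal (1 - δ) ≤ 1 - ENNReal.ofReal δ := by
          by_cases h1 : δ ≤ 1
          · refine ENNReal.le_sub_of_add_le_right ENNReal.ofReal_ne_top ?_
            rw [← ENNReal.ofReal_add (by linarith) (le_of_lt hδ)]
            rw [show 1 - δ + δ = 1 by ring, ENNReal.ofReal_one]
          · rw [ENNReal.ofReal_eq_zero.mpr (by linarith)]
            exact zero_le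
    _ ≤ 1 - ∑ S ∈ Finset.univ.filter (fun S : Sample (Fin (t-1)) n =>
          ¬ ∀ j < t, |Ghat S j - Gf D j| ≤ γ), (∏ i, D (S i)) :=
          tsub_le_tsub_left hbadE 1
    _ = ∑ S ∈ Finset.univ.filter (fun S : Sample (Fin (t-1)) n =>
          ∀ j < t, |Ghat S j - Gf D j| ≤ γ), (∏ i, D (S i)) := hgoodE.symm
    _ ≤ ∑ S ∈ Finset.univ.filter (fun S : Sample (Fin (t-1)) n =>
          ∀ j < t, |Ghat S j - Gf D j| ≤ γ), (∏ i, D (S i)) *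
            ((PMF.pure (tauF t (t - 1 - min (t - 1) (Nat.floor (vhat ε t S))))).toOuterMeasure
              (Set.range (fun ℓ : Fin 2 =>
                if ℓ = 0 then tauF t (t - 1 - q1) else tauF t (t - 1 - q2)))) := by
          refine Finset.sum_le_sum fun S hS => ?_
          rw [PMF.toOuterMeasure_pure_apply,
            if_pos (hmem S (Finset.mem_filter.mp hS).2), mul_one]
    _ ≤ ∑ S : Sample (Fin (t-1)) n, (∏ i, D (S i)) *
            ((PMF.pure (tauF t (t - 1 - min (t - 1) (Nat.floor (vhat ε t S))))).toOuterMeasure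
              (Set.range (fun ℓ : Fin 2 =>
                if ℓ = 0 then tauF t (t - 1 - q1) else tauF t (t - 1 - q2)))) :=
          Finset.sum_le_sum_of_subset (Finset.filter_subset _ _)




variable {X : Type*} [Fintype X] [DecidableEq X]

noncomputable def clamp01 (u : ℝ) : ℝ := max 0 (min 1 u)

lemma clamp01_nonneg (u : ℝ) : 0 ≤ clamp01 u := le_max_left _ _

lemma clamp01_le_one (u : ℝ) : clamp01 u ≤ 1 := max_le zero_le_one (min_le_left _ _)

lemma clamp01_of_mem {u : ℝ} (h0 : 0 ≤ u) (h1 : u ≤ 1) : clamp01 u = u := by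
  rw [clamp01, min_eq_right h1, max_eq_right h0]

lemma continuous_clamp01 : Continuous clamp01 :=
  continuous_const.max (continuous_const.min continuous_id)

noncomputable def seg (a b : X × Bool) (hab : a ≠ b) (u : ℝ) : PMF (X × Bool) :=
  PMF.ofFintype (fun c => if c = a then ENNReal.ofReal (1 - clamp01 u)
    else if c = b then ENNReal.ofReal (clamp01 u) else 0) (by
    classical
    have hfun : ∀ c : X × Bool,
        (if c = a then ENNReal.ofReal (1 - clamp01 u)
          else if c = b then ENNReal.ofReal (clamp01 u) else 0)
        = (if c = a then ENNReal.ofReal (1 - clamp01 u) else 0)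
          + (if c = b then ENNReal.ofReal (clamp01 u) else 0) := by
      intro c
      by_cases h1 : c = a
      · subst h1
        rw [if_pos rfl, if_pos rfl, if_neg hab, add_zero]
      · rw [if_neg h1, if_neg h1, zero_add]
    rw [Finset.sum_congr rfl (fun c _ => hfun c), Finset.sum_add_distrib,
      Finset.sum_ite_eq' Finset.univ a _, Finset.sum_ite_eq' Finset.univ b _]
    simp only [Finset.mem_univ, if_true]
    rw [← ENNReal.ofReal_add (by linarith [clamp01_le_one u]) (clamp01_nonneg u)]
    rw [show 1 - clamp01 u + clamp01 u = 1 by ring, ENNReal.ofReal_one])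

lemma seg_apply {a b : X × Bool} (hab : a ≠ b) (u : ℝ) (c : X × Bool) :
    seg a b hab u c = (if c = a then ENNReal.ofReal (1 - clamp01 u)
      else if c = b then ENNReal.ofReal (clamp01 u) else 0) :=
  PMF.ofFintype_apply _ _

lemma seg_realizable {H : Set (X → Bool)} {a b : X × Bool} (hab : a ≠ b) (h : X → Bool)
    (hmem : h ∈ H) (hha : h a.1 = a.2) (hhb : h b.1 = b.2) (u : ℝ) :
    Realizable H (seg a b hab u) := by
  have h0 : popLoss (seg a b hab u) h = 0 := by
    rw [popLoss, PMF.toOuterMeasure_apply]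
    refine ENNReal.tsum_eq_zero.mpr fun c => ?_
    rw [Set.indicator_apply]
    split
    · rename_i hc
      have hca : c ≠ a := fun h' => hc (by rw [h']; exact hha)
      have hcb : c ≠ b := fun h' => hc (by rw [h']; exact hhb)
      rw [seg_apply, if_neg hca, if_neg hcb]
    · rfl
  exact fun e he => ⟨h, hmem, by rw [h0]; exact he⟩

lemma seg_apply_toReal {a b : X × Bool} (hab : a ≠ b) (u : ℝ) (c : X × Bool) :
    ((seg a b hab u) c).toReal
      = if c = a then 1 - clamp01 u else if c = b then clamp01 u else 0 := by
  rw [seg_apply]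
  by_cases h1 : c = a
  · rw [if_pos h1, if_pos h1, ENNReal.toReal_ofReal (by linarith [clamp01_le_one u])]
  · rw [if_neg h1, if_neg h1]
    by_cases h2 : c = b
    · rw [if_pos h2, if_pos h2, ENNReal.toReal_ofReal (clamp01_nonneg u)]
    · rw [if_neg h2, if_neg h2, ENNReal.toReal_zero]

lemma continuous_outProb_seg {n : ℕ} {a b : X × Bool} (hab : a ≠ b)
    (A : Sample X n → PMF (X → Bool)) (E : Set (X → Bool)) :
    Continuous (fun u => (outProb (seg a b hab u) A E).toReal) := by
  have hfun : (fun u => (outProb (seg a b hab u) A E).toReal)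
      = fun u => ∑ S : Sample X n, (∏ i, ((seg a b hab u) (S i)).toReal) *
          ((A S).toOuterMeasure E).toReal := funext fun u => outProb_toReal _ _ _
  rw [hfun]
  refine continuous_finset_sum _ fun S _ => Continuous.mul ?_ continuous_const
  refine continuous_finset_prod _ fun i _ => ?_
  have h2 : (fun u => ((seg a b hab u) (S i)).toReal)
      = fun u => if S i = a then 1 - clamp01 u else if S i = b then clamp01 u else 0 :=
    funext fun u => seg_apply_toReal hab u (S i)
  rw [h2]
  by_cases h1 : S i = a
  · simp only [if_pos h1]
    exact continuous_const.sub continuous_clamp01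
  · simp only [if_neg h1]
    by_cases hb : S i = b
    · simp only [if_pos hb]
      exact continuous_clamp01
    · simp only [if_neg hb]
      exact continuous_const

lemma outProb_toReal_compl {n : ℕ} (D : PMF (X × Bool)) (A : Sample X n → PMF (X → Bool))
    (E : Set (X → Bool)) :
    (outProb D A E).toReal + (outProb D A Eᶜ).toReal = 1 := by
  rw [← ENNReal.toReal_add (outProb_ne_top D A E) (outProb_ne_top D A Eᶜ),
    outProb_add_compl, ENNReal.toReal_one]

lemma twothird_le_toReal {x : ℝ≥0∞} (hx : x ≠ ⊤)
    (h : ENNReal.ofReal (1 - 1/3) ≤ x) : 2/3 ≤ x.toReal := by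
  have := ENNReal.toReal_mono hx h
  rw [ENNReal.toReal_ofReal (by norm_num)] at this
  linarith

lemma dichotomy {n : ℕ} (D : PMF (X × Bool)) (A : Sample X n → PMF (X → Bool))
    (T : Set (X → Bool)) (h : X → Bool)
    (hprob : ENNReal.ofReal (1 - 1/3) ≤ outProb D A {h}) :
    2/3 ≤ (outProb D A T).toReal ∨ (outProb D A T).toReal ≤ 1/3 := by
  by_cases hT : h ∈ T
  · left
    have hle : outProb D A {h} ≤ outProb D A T :=
      outProb_mono D A (Set.singleton_subset_iff.mpr hT)
    exact twothird_le_toReal (outProb_ne_top D A T) (le_trans hprob hle)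
  · right
    have hle : outProb D A {h} ≤ outProb D A Tᶜ :=
      outProb_mono D A (Set.singleton_subset_iff.mpr hT)
    have h2 := twothird_le_toReal (outProb_ne_top D A Tᶜ) (le_trans hprob hle)
    have h3 := outProb_toReal_compl D A T
    linarith



lemma threshold_not_zero (t : ℕ) (ht : 3 ≤ t) :
    ¬ ∃ A : LearningRule (Fin (t - 1)), IsListLearner (thresholdClass t) A (1/2) 0 := by
  classical
  rintro ⟨A, hA⟩
  obtain ⟨n, hn⟩ := hA (1/2) (by norm_num)
  set x0 : Fin (t - 1) := ⟨0, by omega⟩ with hx0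
  set x1 : Fin (t - 1) := ⟨1, by omega⟩ with hx1
  have h12 : ((x0, true) : Fin (t-1) × Bool) ≠ (x1, true) := by
    simp [hx0, hx1, Prod.ext_iff, Fin.ext_iff]
  have hreal : Realizable (thresholdClass t) (seg (x0, true) (x1, true) h12 0) :=
    seg_realizable h12 (tauF t 0) (tauF_mem (by omega)) (by simp [tauF]) (by simp [tauF]) 0
  obtain ⟨hs, -, hprob⟩ := hn _ hreal
  have hempty : Set.range hs = ∅ := Set.range_eq_empty hs
  rw [hempty] at hprob
  have hzero : outProb (seg (x0, true) (x1, true) h12 0) (A n) ∅ = 0 := by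
    rw [outProb_eq_sum]
    refine Finset.sum_eq_zero fun S _ => ?_
    have : ((A n S).toOuterMeasure) ∅ = 0 := by
      rw [PMF.toOuterMeasure_apply]
      simp
    rw [this, mul_zero]
  rw [hzero, le_zero_iff, ENNReal.ofReal_eq_zero] at hprob
  norm_num at hprob

lemma threshold_not_one (t : ℕ) (ht : 3 ≤ t) :
    ¬ ∃ A : LearningRule (Fin (t - 1)), IsListLearner (thresholdClass t) A (1/2) 1 := by
  classical
  rintro ⟨A, hA⟩
  obtain ⟨n, hn⟩ := hA (1/3) (by norm_num)
  set x0 : Fin (t - 1) := ⟨0, by omega⟩ with hx0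
  set x1 : Fin (t - 1) := ⟨1, by omega⟩ with hx1
  set a1 : Fin (t-1) × Bool := (x0, true) with ha1
  set a2 : Fin (t-1) × Bool := (x1, true) with ha2
  set a3 : Fin (t-1) × Bool := (x0, false) with ha3
  have h12 : a1 ≠ a2 := by
    simp [ha1, ha2, hx0, hx1, Prod.ext_iff, Fin.ext_iff]
  have h23 : a2 ≠ a3 := by
    simp [ha2, ha3, hx0, hx1, Prod.ext_iff, Fin.ext_iff]
  have h13 : a1 ≠ a3 := by
    simp [ha1, ha3, Prod.ext_iff]
  have htau0 : ∀ u, Realizable (thresholdClass t) (seg a1 a2 h12 u) := fun u =>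
    seg_realizable h12 (tauF t 0) (tauF_mem (by omega)) (by simp [ha1, tauF]) (by simp [ha2, tauF]) u
  have htau1 : ∀ u, Realizable (thresholdClass t) (seg a2 a3 h23 u) := fun u =>
    seg_realizable h23 (tauF t 1) (tauF_mem (by omega))
      (by simp [ha2, tauF, hx1]) (by simp [ha3, tauF, hx0]) u
  set T : Set ((Fin (t-1)) → Bool) := {h | h x0 = true} with hT
  set F1 : ℝ → ℝ := fun u => (outProb (seg a1 a2 h12 u) (A n) T).toReal with hF1
  set F2 : ℝ → ℝ := fun u => (outProb (seg a2 a3 h23 u) (A n) T).toReal with hF2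
  have hc1 : Continuous F1 := continuous_outProb_seg h12 (A n) T
  have hc2 : Continuous F2 := continuous_outProb_seg h23 (A n) T
  -- range of a Fin-1 family
  have hrange : ∀ hs : Fin 1 → ((Fin (t-1)) → Bool), Set.range hs = {hs 0} := by
    intro hs
    rw [Set.range_unique]
    rfl
  have hdi1 : ∀ u, 2/3 ≤ F1 u ∨ F1 u ≤ 1/3 := by
    intro u
    obtain ⟨hs, -, hprob⟩ := hn _ (htau0 u)
    rw [hrange hs] at hprob
    exact dichotomy _ (A n) T (hs 0) hprob
  have hdi2 : ∀ u, 2/3 ≤ F2 u ∨ F2 u ≤ 1/3 := by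
    intro u
    obtain ⟨hs, -, hprob⟩ := hn _ (htau1 u)
    rw [hrange hs] at hprob
    exact dichotomy _ (A n) T (hs 0) hprob
  -- endpoint 1 : F1 0 ≥ 2/3
  have hend1 : 2/3 ≤ F1 0 := by
    obtain ⟨hs, hloss, hprob⟩ := hn _ (htau0 0)
    rw [hrange hs] at hprob
    have hval : (seg a1 a2 h12 0) a1 = 1 := by
      rw [seg_apply, if_pos rfl, clamp01_of_mem le_rfl zero_le_one]
      norm_num
    have hmemT : hs 0 ∈ T := by
      by_contra hc
      have hmem1 : a1 ∈ {p : (Fin (t-1)) × Bool | hs 0 p.1 ≠ p.2} := by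
        simp only [ha1, Set.mem_setOf_eq]
        simp only [hT, Set.mem_setOf_eq] at hc
        simp [hc]
      have hge : (1:ℝ≥0∞) ≤ popLoss (seg a1 a2 h12 0) (hs 0) := by
        rw [popLoss, PMF.toOuterMeasure_apply]
        calc (1:ℝ≥0∞) = Set.indicator {p : (Fin (t-1)) × Bool | hs 0 p.1 ≠ p.2}
              (⇑(seg a1 a2 h12 0)) a1 := by
              rw [Set.indicator_of_mem hmem1, hval]
        _ ≤ _ := ENNReal.le_tsum a1
      have hlt : popLoss (seg a1 a2 h12 0) (hs 0) < 1 := by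
        refine lt_of_le_of_lt (hloss 0) ?_
        rw [show (1:ℝ≥0∞) = ENNReal.ofReal 1 by simp]
        exact (ENNReal.ofReal_lt_ofReal_iff (by norm_num)).mpr (by norm_num)
      exact absurd hge (not_le.mpr hlt)
    have hle : outProb (seg a1 a2 h12 0) (A n) {hs 0} ≤ outProb (seg a1 a2 h12 0) (A n) T :=
      outProb_mono _ (A n) (Set.singleton_subset_iff.mpr hmemT)
    exact twothird_le_toReal (outProb_ne_top _ _ _) (le_trans hprob hle)
  -- endpoint 2 : F2 1 ≤ 1/3
  have hend2 : F2 1 ≤ 1/3 := by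
    obtain ⟨hs, hloss, hprob⟩ := hn _ (htau1 1)
    rw [hrange hs] at hprob
    have hval : (seg a2 a3 h23 1) a3 = 1 := by
      rw [seg_apply, if_neg (Ne.symm h23), if_pos rfl, clamp01_of_mem zero_le_one le_rfl]
      norm_num
    have hmemT : hs 0 ∉ T := by
      intro hc
      simp only [hT, Set.mem_setOf_eq] at hc
      have hmem1 : a3 ∈ {p : (Fin (t-1)) × Bool | hs 0 p.1 ≠ p.2} := by
        simp only [ha3, Set.mem_setOf_eq]
        simp [hc]
      have hge : (1:ℝ≥0∞) ≤ popLoss (seg a2 a3 h23 1) (hs 0) := by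
        rw [popLoss, PMF.toOuterMeasure_apply]
        calc (1:ℝ≥0∞) = Set.indicator {p : (Fin (t-1)) × Bool | hs 0 p.1 ≠ p.2}
              (⇑(seg a2 a3 h23 1)) a3 := by
              rw [Set.indicator_of_mem hmem1, hval]
        _ ≤ _ := ENNReal.le_tsum a3
      have hlt : popLoss (seg a2 a3 h23 1) (hs 0) < 1 := by
        refine lt_of_le_of_lt (hloss 0) ?_
        rw [show (1:ℝ≥0∞) = ENNReal.ofReal 1 by simp]
        exact (ENNReal.ofReal_lt_ofReal_iff (by norm_num)).mpr (by norm_num)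
      exact absurd hge (not_le.mpr hlt)
    have hle : outProb (seg a2 a3 h23 1) (A n) {hs 0} ≤ outProb (seg a2 a3 h23 1) (A n) Tᶜ :=
      outProb_mono _ (A n) (Set.singleton_subset_iff.mpr hmemT)
    have h2 := twothird_le_toReal (outProb_ne_top _ _ _) (le_trans hprob hle)
    have h3 := outProb_toReal_compl (seg a2 a3 h23 1) (A n) T
    simp only [hF2]
    linarith
  -- midpoint equality
  have hBeq : seg a1 a2 h12 1 = seg a2 a3 h23 0 := by
    refine DFunLike.ext _ _ fun c => ?_
    rw [seg_apply, seg_apply, clamp01_of_mem zero_le_one le_rfl, clamp01_of_mem le_rfl zero_le_one]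
    by_cases hc1 : c = a1
    · rw [if_pos hc1, if_neg (by rw [hc1]; exact h12), if_neg (by rw [hc1]; exact h13)]
      norm_num
    · rw [if_neg hc1]
      by_cases hc2 : c = a2
      · rw [if_pos hc2, if_pos hc2]
        norm_num
      · rw [if_neg hc2, if_neg hc2]
        by_cases hc3 : c = a3
        · rw [if_pos hc3]
          norm_num
        · rw [if_neg hc3]
  have hB : F1 1 = F2 0 := by
    simp only [hF1, hF2, hBeq]
  rcases hdi2 0 with hge | hle
  · -- IVT on F2
    have hsub := intermediate_value_Icc' (by norm_num : (0:ℝ) ≤ 1) hc2.continuousOn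
    have hmem12 : (1/2 : ℝ) ∈ Set.Icc (F2 1) (F2 0) := ⟨by linarith, by linarith⟩
    obtain ⟨u, -, hFu⟩ := hsub hmem12
    rcases hdi2 u with h | h <;> rw [hFu] at h <;> linarith
  · -- IVT on F1 ; F1 1 = F2 0 ≤ 1/3
    have hsub := intermediate_value_Icc' (by norm_num : (0:ℝ) ≤ 1) hc1.continuousOn
    have hmem12 : (1/2 : ℝ) ∈ Set.Icc (F1 1) (F1 0) := ⟨by rw [hB]; linarith, by linarith⟩
    obtain ⟨u, -, hFu⟩ := hsub hmem12
    rcases hdi1 u with h | h <;> rw [hFu] at h <;> linarith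

lemma threshold_listNumber (t : ℕ) (ht : 3 ≤ t) : listNumber (thresholdClass t) = 2 := by
  apply le_antisymm
  · exact sInf_le ⟨2, rfl, fun ε hε => threshold_upper t ht ε hε⟩
  · refine le_sInf ?_
    rintro L ⟨l, rfl, hl⟩
    match l with
    | 0 => exact absurd (hl (1/2) (by norm_num)) (threshold_not_zero t ht)
    | 1 => exact absurd (hl (1/2) (by norm_num)) (threshold_not_one t ht)
    | (l+2) => exact_mod_cast Nat.le_add_left 2 l



end Aux

/-- for every `d ≥ 2`, the (finite) class of thresholds over `2^d` points
has Littlestone dimension `d` and list replicability number `2`. -/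
theorem stmt_5 (d : ℕ) (hd : 2 ≤ d) :
    Ldim (thresholdClass (2 ^ d)) = (d : ℕ∞) ∧
    listNumber (thresholdClass (2 ^ d)) = 2 := by
  have ht : 3 ≤ 2 ^ d := by
    have := two_pow_sub_pos d hd
    omega
  exact ⟨Ldim_pow d hd, threshold_listNumber (2 ^ d) ht⟩

end Replicability
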